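/- (Fundamental inequality when f is Lipschitz differentiable.) Suppose f is differentiable with (1/β_f)-Lipschitz gradient, β_f > 0. Let γ ∈ (0, 2β_V), λ > 0, z ∈ H, z⁺ := T_λ(z), z* a fixed point of T, and x* := P_V z*. Then, with x_h := P_V z and x_f := prox_{γf}(refl_{χV}(z − γ∇h(z))): if γ ≤ β_f, then 2γλ(f(x_h) + h(x_h) − f(x*) − h(x*)) ≤ ‖z − z*‖² − ‖z⁺ − z*‖² + (1 + (γ − β_f)/(β_f λ))‖z − z⁺‖² + 2γ⟪∇h(x_h) − ∇h(x*), z − z⁺⟫; and if γ > β_f, then 2γλ(f(x_h) + h(x_h) − f(x*) − h(x*)) ≤ (1 + (γ − β_f)/(2β_f))(‖z − z*‖² − ‖z⁺ − z*‖² + ‖z − z⁺‖²) + 2γ(1 + (γ − β_f)/(2β_f))⟪∇h(x_h) − ∇h(x*), z − z⁺⟫. -/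

import Mathlib

open scoped RealInnerProductSpace

section Aux
variable {H : Type*} [NormedAddCommGroup H] [InnerProductSpace ℝ H] [CompleteSpace H]

lemma line_hasDerivAt {f : H → ℝ} {gf : H → H}
    (hdiff : ∀ x, HasGradientAt f (gf x) x) (x d : H) (t : ℝ) :
    HasDerivAt (fun s : ℝ => f (x + s • d)) ⟪gf (x + t • d), d⟫ t := by
  have h1 : HasDerivAt (fun s : ℝ => x + s • d) d t := by
    simpa using ((hasDerivAt_id t).smul_const d).const_add x
  have h2 := (hdiff (x + t • d)).hasFDerivAt.comp_hasDerivAt t h1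
  simpa [InnerProductSpace.toDual_apply_apply, Function.comp_def] using h2

/-- gradient inequality for convex differentiable functions -/
lemma convex_grad_ineq {f : H → ℝ} {gf : H → H} (hconv : ConvexOn ℝ Set.univ f)
    (hdiff : ∀ x, HasGradientAt f (gf x) x) (x y : H) :
    f x + ⟪gf x, y - x⟫ ≤ f y := by
  have hφ : ConvexOn ℝ Set.univ (fun s : ℝ => f (x + s • (y - x))) := by
    have h := hconv.comp_affineMap (AffineMap.lineMap x y)
    rw [Set.preimage_univ] at h
    have e : (fun s : ℝ => f (x + s • (y - x))) = f ∘ AffineMap.lineMap x y := by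
      funext s
      simp [AffineMap.lineMap_apply, vsub_eq_sub, vadd_eq_add, add_comm]
    rw [e]; exact h
  have hd := line_hasDerivAt hdiff x (y - x) 0
  simp only [zero_smul, add_zero] at hd
  have hs := hφ.le_slope_of_hasDerivAt (Set.mem_univ 0) (Set.mem_univ 1) one_pos hd
  rw [slope_def_field] at hs
  simp only [one_smul, zero_smul, add_zero] at hs
  have hxy : x + (y - x) = y := by abel
  rw [hxy] at hs
  have : (f y - f x) / (1 - 0) = f y - f x := by norm_num
  rw [this] at hs
  linarith

/-- descent lemma, multiplied form -/
lemma descent_ineq {f : H → ℝ} {gf : H → H} {β : ℝ} (hβ : 0 < β)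
    (hdiff : ∀ x, HasGradientAt f (gf x) x)
    (hlip : LipschitzWith (1 / β).toNNReal gf) (x y : H) :
    2 * β * f y ≤ 2 * β * f x + 2 * β * ⟪gf x, y - x⟫ + ‖y - x‖ ^ 2 := by
  set d := y - x with hd
  set φ : ℝ → ℝ := fun t => f (x + t • d) - t * ⟪gf x, d⟫ - t ^ 2 * (‖d‖ ^ 2 / (2 * β)) with hφ
  have hφ' : ∀ t : ℝ, HasDerivAt φ
      (⟪gf (x + t • d), d⟫ - ⟪gf x, d⟫ - 2 * t * (‖d‖ ^ 2 / (2 * β))) t := by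
    intro t
    have h1 := line_hasDerivAt hdiff x d t
    have h2 : HasDerivAt (fun s : ℝ => s * ⟪gf x, d⟫) ⟪gf x, d⟫ t := hasDerivAt_mul_const _
    have h3 : HasDerivAt (fun s : ℝ => s ^ 2 * (‖d‖ ^ 2 / (2 * β)))
        (2 * t * (‖d‖ ^ 2 / (2 * β))) t := by
      have := (hasDerivAt_pow 2 t).mul_const (‖d‖ ^ 2 / (2 * β))
      simpa using this
    exact (h1.sub h2).sub h3
  have hcont : Continuous φ := by
    have : ∀ t, ContinuousAt φ t := fun t => (hφ' t).continuousAt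
    exact continuous_iff_continuousAt.mpr this
  have hanti : AntitoneOn φ (Set.Icc 0 1) := by
    apply antitoneOn_of_deriv_nonpos (convex_Icc 0 1) hcont.continuousOn
    · intro t _
      exact (hφ' t).differentiableAt.differentiableWithinAt
    · intro t ht
      rw [interior_Icc] at ht
      rw [(hφ' t).deriv]
      have hub : ⟪gf (x + t • d), d⟫ - ⟪gf x, d⟫ ≤ (1 / β) * (t * ‖d‖) * ‖d‖ := by
        have h1 : ⟪gf (x + t • d) - gf x, d⟫ ≤ ‖gf (x + t • d) - gf x‖ * ‖d‖ :=
          real_inner_le_norm _ _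
        have h2 : ‖gf (x + t • d) - gf x‖ ≤ (1 / β) * ‖(x + t • d) - x‖ := by
          have := hlip.dist_le_mul (x + t • d) x
          rw [dist_eq_norm, dist_eq_norm] at this
          have hc : ((1 / β).toNNReal : ℝ) = 1 / β := Real.coe_toNNReal _ (by positivity)
          rw [hc] at this
          exact this
        have h3 : ‖(x + t • d) - x‖ = t * ‖d‖ := by
          have : (x + t • d) - x = t • d := by abel
          rw [this, norm_smul, Real.norm_eq_abs, abs_of_pos ht.1]
        rw [h3] at h2
        have h4 : ⟪gf (x + t • d) - gf x, d⟫ = ⟪gf (x + t • d), d⟫ - ⟪gf x, d⟫ :=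
          inner_sub_left _ _ _
        have h5 : ‖gf (x + t • d) - gf x‖ * ‖d‖ ≤ (1 / β) * (t * ‖d‖) * ‖d‖ := by
          apply mul_le_mul_of_nonneg_right h2 (norm_nonneg _)
        linarith [h4 ▸ h1]
      have heq : (1 / β) * (t * ‖d‖) * ‖d‖ = 2 * t * (‖d‖ ^ 2 / (2 * β)) := by
        field_simp
      linarith [heq ▸ hub]
  have key := hanti (Set.left_mem_Icc.mpr zero_le_one) (Set.right_mem_Icc.mpr zero_le_one)
      zero_le_one
  have hφ1 : φ 1 = f y - ⟪gf x, d⟫ - ‖d‖ ^ 2 / (2 * β) := by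
    have hxy : x + d = y := by rw [hd]; abel
    simp [hφ, hxy]
  have hφ0 : φ 0 = f x := by simp [hφ]
  rw [hφ1, hφ0] at key
  have hid : 2 * β * (‖d‖ ^ 2 / (2 * β)) = ‖d‖ ^ 2 := by field_simp
  have key2 := mul_le_mul_of_nonneg_left key (by positivity : (0:ℝ) ≤ 2 * β)
  nlinarith [key2]

/-- strengthened gradient inequality for convex functions with Lipschitz gradient -/
lemma strong_grad_ineq {f : H → ℝ} {gf : H → H} {β : ℝ} (hβ : 0 < β)
    (hconv : ConvexOn ℝ Set.univ f)
    (hdiff : ∀ x, HasGradientAt f (gf x) x)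
    (hlip : LipschitzWith (1 / β).toNNReal gf) (x y : H) :
    f x + ⟪gf x, y - x⟫ + β / 2 * ‖gf y - gf x‖ ^ 2 ≤ f y := by
  set Δ : H := gf y - gf x with hΔ
  set w : H := y - β • Δ with hw
  have hcvx : f x + ⟪gf x, w - x⟫ ≤ f w := convex_grad_ineq hconv hdiff x w
  have hdsc : 2 * β * f w ≤ 2 * β * f y + 2 * β * ⟪gf y, w - y⟫ + ‖w - y‖ ^ 2 :=
    descent_ineq hβ hdiff hlip y w
  have e0 : w - y = -(β • Δ) := by rw [hw]; abel
  have e1 : ⟪gf x, w - x⟫ = ⟪gf x, y - x⟫ - β * ⟪gf x, Δ⟫ := by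
    have : w - x = (y - x) - β • Δ := by rw [hw]; abel
    rw [this, inner_sub_right, real_inner_smul_right]
  have e2 : ⟪gf y, w - y⟫ = -(β * ⟪gf y, Δ⟫) := by
    rw [e0, inner_neg_right, real_inner_smul_right]
  have e3 : ‖w - y‖ ^ 2 = β ^ 2 * ‖Δ‖ ^ 2 := by
    rw [e0, norm_neg, norm_smul, Real.norm_eq_abs, mul_pow, sq_abs]
  have e4 : ⟪gf y, Δ⟫ - ⟪gf x, Δ⟫ = ‖Δ‖ ^ 2 := by
    rw [← inner_sub_left, ← hΔ, real_inner_self_eq_norm_sq]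
  have hcvx2 := mul_le_mul_of_nonneg_left hcvx (by positivity : (0:ℝ) ≤ 2 * β)
  have e1s := congrArg (fun t : ℝ => 2 * β * t) e1
  have e2s := congrArg (fun t : ℝ => 2 * β * t) e2
  have e4s := congrArg (fun t : ℝ => 2 * β ^ 2 * t) e4
  have hbig : 2 * β * (f x + ⟪gf x, y - x⟫ + β / 2 * ‖Δ‖ ^ 2) ≤ 2 * β * f y := by
    nlinarith [hcvx2, hdsc, e1s, e2s, e4s, e3]
  exact le_of_mul_le_mul_left hbig (by positivity)



lemma prox_grad_eq {f : H → ℝ} {gf proxf : H → H} {γ : ℝ} (hγ : 0 < γ)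
    (hdiff : ∀ x, HasGradientAt f (gf x) x)
    (hprox : ∀ x, IsMinOn (fun y => f y + (1 / (2 * γ)) * ‖y - x‖ ^ 2) Set.univ (proxf x))
    (u : H) :
    γ • gf (proxf u) = u - proxf u := by
  set p := proxf u with hp
  have hF : HasFDerivAt (fun y => f y + (1 / (2 * γ)) * ‖y - u‖ ^ 2)
      ((InnerProductSpace.toDual ℝ H (gf p)) +
        (1 / (2 * γ)) • ((2 : ℕ) • (innerSL ℝ (p - u)).comp (ContinuousLinearMap.id ℝ H))) p := by
    have h1 := (hdiff p).hasFDerivAt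
    have h2 := ((hasFDerivAt_id p).sub_const u).norm_sq
    exact h1.add (h2.const_mul _)
  have hmin : IsLocalMin (fun y => f y + (1 / (2 * γ)) * ‖y - u‖ ^ 2) p := by
    have h := hprox u
    rw [isMinOn_univ_iff] at h
    exact Filter.Eventually.of_forall h
  have hzero := hmin.hasFDerivAt_eq_zero hF
  have hv : ∀ v : H, ⟪gf p, v⟫ + γ⁻¹ * 2⁻¹ * (⟪p, v⟫ - ⟪u, v⟫) + γ⁻¹ * 2⁻¹ * (⟪p, v⟫ - ⟪u, v⟫) = 0 := by
    intro v
    have := ContinuousLinearMap.ext_iff.mp hzero v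
    simp [InnerProductSpace.toDual_apply_apply, two_smul, inner_sub_left] at this
    linarith [this]
  have key : gf p + (1 / γ) • (p - u) = 0 := by
    apply ext_inner_right ℝ
    intro v
    rw [inner_add_left, real_inner_smul_left, inner_zero_left, inner_sub_left]
    have h := hv v
    have hne : γ ≠ 0 := ne_of_gt hγ
    field_simp at h ⊢
    linarith
  have h2 : gf p = (1 / γ) • (u - p) := by
    have := eq_neg_of_add_eq_zero_left key
    rw [this, ← smul_neg, neg_sub]
  rw [h2, smul_smul]
  rw [show γ * (1 / γ) = 1 by field_simp, one_smul]


end Aux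

/-- the fundamental inequality when f is Lipschitz differentiable. -/
theorem fdrs_fundamental_inequality_lipschitz_f
    {H : Type*} [NormedAddCommGroup H] [InnerProductSpace ℝ H] [CompleteSpace H]
    (V : Submodule ℝ H) [CompleteSpace V]
    (PV : H → H) (hPV : ∀ x, PV x = (V.orthogonalProjectionOnto x : H))
    (f g : H → ℝ) (gradg gradh gradf proxf : H → H) (h : H → ℝ)
    (β βV γ βf : ℝ) (hβ : 0 < β) (hβV : 0 < βV) (hβf : 0 < βf)
    (hγ : γ ∈ Set.Ioo (0 : ℝ) (2 * βV))
    (hfconv : ConvexOn ℝ Set.univ f) (hfcont : Continuous f)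
    (hgconv : ConvexOn ℝ Set.univ g)
    (hgdiff : ∀ x, HasGradientAt g (gradg x) x)
    (hglip : LipschitzWith (1 / β).toNNReal gradg)
    (hh : ∀ x, h x = g (PV x))
    (hgradh : ∀ x, gradh x = PV (gradg (PV x)))
    (hgradhlip : LipschitzWith (1 / βV).toNNReal gradh)
    (hfgrad : ∀ x, HasGradientAt f (gradf x) x)
    (hfgradlip : LipschitzWith (1 / βf).toNNReal gradf)
    (hprox : ∀ x, IsMinOn (fun y => f y + (1 / (2 * γ)) * ‖y - x‖ ^ 2) Set.univ (proxf x))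
    (T : H → H)
    (hT : ∀ z, T z = (1 / 2 : ℝ) • (z - γ • gradh z)
        + (1 / 2 : ℝ) • ((2 : ℝ) • proxf ((2 : ℝ) • PV (z - γ • gradh z) - (z - γ • gradh z))
            - ((2 : ℝ) • PV (z - γ • gradh z) - (z - γ • gradh z))))
    -- z, λ, z⁺, a fixed point z*, x* := P_V z*, and the associated points
    (z zp xh xf zs xs : H) (lam : ℝ) (hlam : 0 < lam)
    (hzp : zp = (1 - lam) • z + lam • T z)
    (hzs : T zs = zs) (hxs : xs = PV zs)
    (hxh : xh = PV z)
    (hxf : xf = proxf ((2 : ℝ) • PV (z - γ • gradh z) - (z - γ • gradh z))) :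
    (γ ≤ βf →
      2 * γ * lam * (f xh + h xh - f xs - h xs)
        ≤ ‖z - zs‖ ^ 2 - ‖zp - zs‖ ^ 2 + (1 + (γ - βf) / (βf * lam)) * ‖z - zp‖ ^ 2
          + 2 * γ * ⟪gradh xh - gradh xs, z - zp⟫) ∧
    (γ > βf →
      2 * γ * lam * (f xh + h xh - f xs - h xs)
        ≤ (1 + (γ - βf) / (2 * βf))
            * (‖z - zs‖ ^ 2 - ‖zp - zs‖ ^ 2 + ‖z - zp‖ ^ 2)
          + 2 * γ * (1 + (γ - βf) / (2 * βf)) * ⟪gradh xh - gradh xs, z - zp⟫) := by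
  obtain ⟨hγ0, hγ2⟩ := hγ
  -- basic projection facts
  have hPmem : ∀ x, PV x ∈ V := fun x => by rw [hPV]; exact SetLike.coe_mem _
  have hPof : ∀ x ∈ V, PV x = x := fun x hx => by
    rw [hPV]; exact V.starProjection_eq_self_iff.mpr hx
  have hPP : ∀ x, PV (PV x) = PV x := fun x => hPof (PV x) (hPmem x)
  have hPsub : ∀ a b : H, PV (a - b) = PV a - PV b := fun a b => by
    rw [hPV, hPV, hPV, map_sub]; rfl
  have hPsmul : ∀ (c : ℝ) (a : H), PV (c • a) = c • PV a := fun c a => by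
    rw [hPV, hPV, map_smul]; rfl
  have hPgh : ∀ a, PV (gradh a) = gradh a := fun a => by rw [hgradh a]; exact hPP _
  have hgz : gradh z = gradh xh := by rw [hgradh z, hgradh xh, hxh, hPP]
  have hgzs : gradh zs = gradh xs := by rw [hgradh zs, hgradh xs, hxs, hPP]
  have hPxh : PV xh = xh := by rw [hxh]; exact hPP z
  have hPxs : PV xs = xs := by rw [hxs]; exact hPP zs
  -- simplified form of T
  have hTa : ∀ a, T a = proxf ((2 : ℝ) • PV (a - γ • gradh a) - (a - γ • gradh a))
      + (a - PV a) := by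
    intro a
    rw [hT a, hPsub, hPsmul, hPgh a]
    module
  have hTz : T z = xf + (z - xh) := by
    rw [hTa z, hxh, hxf]
  have hzzp : z - zp = lam • (xh - xf) := by
    rw [hzp, hTz]; module
  -- the fixed point
  have hqs : proxf ((2 : ℝ) • PV (zs - γ • gradh zs) - (zs - γ • gradh zs)) = xs := by
    have h1 := hzs
    rw [hTa zs] at h1
    have h2 := eq_sub_of_add_eq h1
    rw [h2, hxs]; abel
  -- key gradient identities from prox optimality
  have VecKey : γ • gradf xf = (2 : ℝ) • xh - z - γ • gradh xh - xf := by
    have h1 := prox_grad_eq hγ0 hfgrad hprox ((2 : ℝ) • PV (z - γ • gradh z) - (z - γ • gradh z))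
    rw [← hxf] at h1
    rw [h1, hPsub, hPsmul, hPgh, hgz, ← hxh]
    module
  have VecKeyS : γ • gradf xs = xs - zs - γ • gradh xs := by
    have h1 := prox_grad_eq hγ0 hfgrad hprox
      ((2 : ℝ) • PV (zs - γ • gradh zs) - (zs - γ • gradh zs))
    rw [hqs] at h1
    rw [h1, hPsub, hPsmul, hPgh, hgzs, ← hxs]
    module
  -- orthogonality
  have hVsub : xh - xs ∈ V := by
    rw [hxh, hxs, hPV, hPV]; exact sub_mem (SetLike.coe_mem _) (SetLike.coe_mem _)
  have O1 : ⟪z - xh, xh - xs⟫ = 0 := by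
    have hz1 : z - xh ∈ Vᗮ := by
      rw [hxh, hPV]; exact V.sub_starProjection_mem_orthogonal z
    exact (Submodule.mem_orthogonal' V _).mp hz1 _ hVsub
  have O2 : ⟪zs - xs, xh - xs⟫ = 0 := by
    have hz1 : zs - xs ∈ Vᗮ := by
      rw [hxs, hPV]; exact V.sub_starProjection_mem_orthogonal zs
    exact (Submodule.mem_orthogonal' V _).mp hz1 _ hVsub
  -- convexity inequalities for h
  have hginner : ∀ (a : H), ∀ v ∈ V, ⟪gradh a, v⟫ = ⟪gradg (PV a), v⟫ := by
    intro a v hv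
    rw [hgradh a, hPV, ← Submodule.starProjection_apply, V.inner_starProjection_left_eq_right,
      Submodule.starProjection_apply, ← hPV, hPof v hv]
  have D4 : h xh + ⟪gradh xh, xs - xh⟫ ≤ h xs := by
    have hc := convex_grad_ineq hgconv hgdiff (PV xh) (PV xs)
    rw [← hh xh, ← hh xs, hPxs, hPxh] at hc
    have hmem : xs - xh ∈ V := by
      rw [show xs - xh = -(xh - xs) by abel]; exact neg_mem hVsub
    have he := hginner xh (xs - xh) hmem
    rw [hPxh] at he
    rw [← he] at hc
    exact hc
  have D5 : h xs + ⟪gradh xs, xh - xs⟫ ≤ h xh := by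
    have hc := convex_grad_ineq hgconv hgdiff (PV xs) (PV xh)
    rw [← hh xh, ← hh xs, hPxs, hPxh] at hc
    have he := hginner xs (xh - xs) hVsub
    rw [hPxs] at he
    rw [← he] at hc
    exact hc
  -- inequalities for f
  have D1 := descent_ineq hβf hfgrad hfgradlip xf xh
  have D2 := strong_grad_ineq hβf hfconv hfgrad hfgradlip xf xs
  have D3 := strong_grad_ineq hβf hfconv hfgrad hfgradlip xs xf
  -- scalar identities
  have SK1 : ⟪γ • gradf xf, xh - xf⟫ = ⟪(2:ℝ) • xh - z - γ • gradh xh - xf, xh - xf⟫ := by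
    rw [VecKey]
  have SK2 : ⟪γ • gradf xf, xh - xs⟫ = ⟪(2:ℝ) • xh - z - γ • gradh xh - xf, xh - xs⟫ := by
    rw [VecKey]
  have SK3 : ⟪γ • gradf xs, xh - xf⟫ = ⟪xs - zs - γ • gradh xs, xh - xf⟫ := by rw [VecKeyS]
  have SK4 : ⟪γ • gradf xs, xh - xs⟫ = ⟪xs - zs - γ • gradh xs, xh - xs⟫ := by rw [VecKeyS]
  have P4 : βf * ‖gradf xf - gradf xs‖ ^ 2 ≤ ⟪gradf xf - gradf xs, xf - xs⟫ := by
    have d2 := D2; have d3 := D3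
    simp only [inner_sub_left, inner_sub_right, inner_add_left, inner_add_right, real_inner_smul_left, real_inner_smul_right, inner_neg_left, inner_neg_right, norm_sub_sq_real, norm_smul, Real.norm_eq_abs, mul_pow, sq_abs, real_inner_self_eq_norm_sq, inner_zero_left, inner_zero_right, mul_zero, zero_mul, real_inner_comm z zs, real_inner_comm z xh, real_inner_comm z xf, real_inner_comm z xs, real_inner_comm z (gradf xf), real_inner_comm z (gradf xs), real_inner_comm z (gradh xh), real_inner_comm z (gradh xs), real_inner_comm zs xh, real_inner_comm zs xf, real_inner_comm zs xs, real_inner_comm zs (gradf xf), real_inner_comm zs (gradf xs), real_inner_comm zs (gradh xh), real_inner_comm zs (gradh xs), real_inner_comm xh xf, real_inner_comm xh xs, real_inner_comm xh (gradf xf), real_inner_comm xh (gradf xs), real_inner_comm xh (gradh xh), real_inner_comm xh (gradh xs), real_inner_comm xf xs, real_inner_comm xf (gradf xf), real_inner_comm xf (gradf xs), real_inner_comm xf (gradh xh), real_inner_comm xf (gradh xs), real_inner_comm xs (gradf xf), real_inner_comm xs (gradf xs), real_inner_comm xs (gradh xh), real_inner_comm xs (gradh xs), real_inner_comm (gradf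 xf) (gradf xs), real_inner_comm (gradf xf) (gradh xh), real_inner_comm (gradf xf) (gradh xs), real_inner_comm (gradf xs) (gradh xh), real_inner_comm (gradf xs) (gradh xs), real_inner_comm (gradh xh) (gradh xs)] at d2 d3 ⊢
    linarith [d2, d3]
  have M : (0:ℝ) ≤ ⟪gradh xh - gradh xs, xh - xs⟫ := by
    have d4 := D4; have d5 := D5
    simp only [inner_sub_left, inner_sub_right, inner_add_left, inner_add_right, real_inner_smul_left, real_inner_smul_right, inner_neg_left, inner_neg_right, norm_sub_sq_real, norm_smul, Real.norm_eq_abs, mul_pow, sq_abs, real_inner_self_eq_norm_sq, inner_zero_left, inner_zero_right, mul_zero, zero_mul, real_inner_comm z zs, real_inner_comm z xh, real_inner_comm z xf, real_inner_comm z xs, real_inner_comm z (gradf xf), real_inner_comm z (gradf xs), real_inner_comm z (gradh xh), real_inner_comm z (gradh xs), real_inner_comm zs xh, real_inner_comm zs xf, real_inner_comm zs xs, real_inner_comm zs (gradf xf), real_inner_comm zs (gradf xs), real_inner_comm zs (gradh xh), real_inner_comm zs (gradh xs), real_inner_comm xh xf, real_inner_comm xh xs, real_inner_comm xh (gradf xf),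 real_inner_comm xh (gradf xs), real_inner_comm xh (gradh xh), real_inner_comm xh (gradh xs), real_inner_comm xf xs, real_inner_comm xf (gradf xf), real_inner_comm xf (gradf xs), real_inner_comm xf (gradh xh), real_inner_comm xf (gradh xs), real_inner_comm xs (gradf xf), real_inner_comm xs (gradf xs), real_inner_comm xs (gradh xh), real_inner_comm xs (gradh xs), real_inner_comm (gradf xf) (gradf xs), real_inner_comm (gradf xf) (gradh xh), real_inner_comm (gradf xf) (gradh xs), real_inner_comm (gradf xs) (gradh xh), real_inner_comm (gradf xs) (gradh xs), real_inner_comm (gradh xh) (gradh xs)] at d4 d5 ⊢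
    linarith [d4, d5]
  have F1 := mul_le_mul_of_nonneg_left D1 (le_of_lt hγ0)
  have F2 := mul_le_mul_of_nonneg_left D2 (by positivity : (0:ℝ) ≤ 2 * βf * γ)
  have F3 := mul_le_mul_of_nonneg_left D4 (by positivity : (0:ℝ) ≤ 2 * βf * γ)
  have E1 := congrArg (fun t : ℝ => 2 * βf * t) SK2
  have E2 := congrArg (fun t : ℝ => 2 * βf * t) O1
  have E3 := congrArg (fun t : ℝ => 2 * βf * t) SK1
  have E4 := congrArg (fun t : ℝ => 2 * βf * t) SK3
  simp only [mul_zero] at E1 E2 E3 E4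
  have G1 : (0:ℝ) ≤ βf * ‖(xh - xf) - γ • (gradf xf - gradf xs)‖ ^ 2 := by positivity
  -- case 1 combination
  have comb1 : γ ≤ βf → 2 * βf * γ * (f xh + h xh - f xs - h xs)
      ≤ 2 * βf * ⟪z - zs, xh - xf⟫ + (γ - βf) * ‖xh - xf‖ ^ 2
        + 2 * βf * γ * ⟪gradh xh - gradh xs, xh - xf⟫ := by
    intro hc1
    have G2 : (0:ℝ) ≤ βf * γ * (βf - γ) * ‖gradf xf - gradf xs‖ ^ 2 :=
      mul_nonneg (mul_nonneg (mul_nonneg hβf.le hγ0.le) (sub_nonneg.mpr hc1)) (by positivity)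
    have f1 := F1; have f2 := F2; have f3 := F3
    have e1 := E1; have e2 := E2; have e3 := E3; have e4 := E4
    have g1 := G1; have g2 := G2
    simp only [inner_sub_left, inner_sub_right, inner_add_left, inner_add_right, real_inner_smul_left, real_inner_smul_right, inner_neg_left, inner_neg_right, norm_sub_sq_real, norm_smul, Real.norm_eq_abs, mul_pow, sq_abs, real_inner_self_eq_norm_sq, inner_zero_left, inner_zero_right, mul_zero, zero_mul, real_inner_comm z zs, real_inner_comm z xh, real_inner_comm z xf, real_inner_comm z xs, real_inner_comm z (gradf xf), real_inner_comm z (gradf xs), real_inner_comm z (gradh xh), real_inner_comm z (gradh xs), real_inner_comm zs xh, real_inner_comm zs xf, real_inner_comm zs xs, real_inner_comm zs (gradf xf), real_inner_comm zs (gradf xs), real_inner_comm zs (gradh xh), real_inner_comm zs (gradh xs), real_inner_comm xh xf, real_inner_comm xh xs, real_inner_comm xh (gradf xf), real_inner_comm xh (gradf xs), real_inner_comm xh (gradh xh), real_inner_comm xh (gradh xs), real_inner_comm xf xs, real_inner_comm xf (gradf xf), real_inner_comm xf (gradf xs), real_inner_comm xf (gradh xh), real_inner_comm xf (gradh xs),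 real_inner_comm xs (gradf xf), real_inner_comm xs (gradf xs), real_inner_comm xs (gradh xh), real_inner_comm xs (gradh xs), real_inner_comm (gradf xf) (gradf xs), real_inner_comm (gradf xf) (gradh xh), real_inner_comm (gradf xf) (gradh xs), real_inner_comm (gradf xs) (gradh xh), real_inner_comm (gradf xs) (gradh xs), real_inner_comm (gradh xh) (gradh xs)] at f1 f2 f3 e1 e2 e3 e4 g1 g2 ⊢
    linarith [f1, f2, f3, e1, e2, e3, e4, g1, g2]
  -- case 2 combination
  have comb2 : βf < γ → 2 * βf * γ * (f xh + h xh - f xs - h xs)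
      ≤ (γ + βf) * ⟪z - zs, xh - xf⟫ + (γ + βf) * γ * ⟪gradh xh - gradh xs, xh - xf⟫ := by
    intro hc2
    have hgb : (0:ℝ) ≤ (γ - βf) * γ := mul_nonneg (sub_nonneg.mpr hc2.le) hγ0.le
    have E3' := congrArg (fun t : ℝ => (γ + βf) * t) SK1
    have E4' := congrArg (fun t : ℝ => (γ + βf) * t) SK3
    have E5 := congrArg (fun t : ℝ => (γ - βf) * t) SK2
    have E6 := congrArg (fun t : ℝ => (γ - βf) * t) SK4
    have E7 := congrArg (fun t : ℝ => (γ - βf) * t) O1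
    have E8 := congrArg (fun t : ℝ => (γ - βf) * t) O2
    have H1 := mul_le_mul_of_nonneg_left P4 hgb
    have H2 := mul_nonneg hgb M
    have f1 := F1; have f2 := F2; have f3 := F3
    have e1 := E1; have e2 := E2
    have g1 := G1
    simp only [inner_sub_left, inner_sub_right, inner_add_left, inner_add_right, real_inner_smul_left, real_inner_smul_right, inner_neg_left, inner_neg_right, norm_sub_sq_real, norm_smul, Real.norm_eq_abs, mul_pow, sq_abs, real_inner_self_eq_norm_sq, inner_zero_left, inner_zero_right, mul_zero, zero_mul, real_inner_comm z zs, real_inner_comm z xh, real_inner_comm z xf, real_inner_comm z xs, real_inner_comm z (gradf xf), real_inner_comm z (gradf xs), real_inner_comm z (gradh xh), real_inner_comm z (gradh xs), real_inner_comm zs xh, real_inner_comm zs xf, real_inner_comm zs xs, real_inner_comm zs (gradf xf), real_inner_comm zs (gradf xs), real_inner_comm zs (gradh xh), real_inner_comm zs (gradh xs), real_inner_comm xh xf, real_inner_comm xh xs, real_inner_comm xh (gradf xf), real_inner_comm xh (gradf xs), real_inner_comm xh (gradh xh), real_inner_comm xh (gradh xs), real_inner_comm xf xs, real_inner_comm xf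 (gradf xf), real_inner_comm xf (gradf xs), real_inner_comm xf (gradh xh), real_inner_comm xf (gradh xs), real_inner_comm xs (gradf xf), real_inner_comm xs (gradf xs), real_inner_comm xs (gradh xh), real_inner_comm xs (gradh xs), real_inner_comm (gradf xf) (gradf xs), real_inner_comm (gradf xf) (gradh xh), real_inner_comm (gradf xf) (gradh xs), real_inner_comm (gradf xs) (gradh xh), real_inner_comm (gradf xs) (gradh xs), real_inner_comm (gradh xh) (gradh xs)] at f1 f2 f3 e1 e2 E3' E4' E5 E6 E7 E8 H1 H2 g1 ⊢
    linarith [f1, f2, f3, e1, e2, E3', E4', E5, E6, E7, E8, H1, H2, g1]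
  constructor
  · -- case γ ≤ βf
    intro hc1
    have c1 := comb1 hc1
    have hzp2 : zp - zs = (z - zs) - lam • (xh - xf) := by rw [← hzzp]; abel
    have hn1 : ‖zp - zs‖ ^ 2
        = ‖z - zs‖ ^ 2 - 2 * lam * ⟪z - zs, xh - xf⟫ + lam ^ 2 * ‖xh - xf‖ ^ 2 := by
      rw [hzp2, norm_sub_sq_real, real_inner_smul_right, norm_smul, Real.norm_eq_abs,
        mul_pow, sq_abs]
      ring
    have hn2 : ‖z - zp‖ ^ 2 = lam ^ 2 * ‖xh - xf‖ ^ 2 := by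
      rw [hzzp, norm_smul, Real.norm_eq_abs, mul_pow, sq_abs]
    have hn3 : ⟪gradh xh - gradh xs, z - zp⟫ = lam * ⟪gradh xh - gradh xs, xh - xf⟫ := by
      rw [hzzp, real_inner_smul_right]
    rw [hn1, hn2, hn3]
    have hsc := mul_le_mul_of_nonneg_left c1 (le_of_lt (div_pos hlam hβf))
    have hL : lam / βf * (2 * βf * γ * (f xh + h xh - f xs - h xs))
        = 2 * γ * lam * (f xh + h xh - f xs - h xs) := by
      field_simp
    have hR : ‖z - zs‖ ^ 2
          - (‖z - zs‖ ^ 2 - 2 * lam * ⟪z - zs, xh - xf⟫ + lam ^ 2 * ‖xh - xf‖ ^ 2)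
          + (1 + (γ - βf) / (βf * lam)) * (lam ^ 2 * ‖xh - xf‖ ^ 2)
          + 2 * γ * (lam * ⟪gradh xh - gradh xs, xh - xf⟫)
        = lam / βf * (2 * βf * ⟪z - zs, xh - xf⟫ + (γ - βf) * ‖xh - xf‖ ^ 2
            + 2 * βf * γ * ⟪gradh xh - gradh xs, xh - xf⟫) := by
      field_simp; ring
    linarith [hsc, hL, hR]
  · -- case γ > βf
    intro hc2
    have c2 := comb2 hc2
    have hzp2 : zp - zs = (z - zs) - lam • (xh - xf) := by rw [← hzzp]; abel
    have hn1 : ‖zp - zs‖ ^ 2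
        = ‖z - zs‖ ^ 2 - 2 * lam * ⟪z - zs, xh - xf⟫ + lam ^ 2 * ‖xh - xf‖ ^ 2 := by
      rw [hzp2, norm_sub_sq_real, real_inner_smul_right, norm_smul, Real.norm_eq_abs,
        mul_pow, sq_abs]
      ring
    have hn2 : ‖z - zp‖ ^ 2 = lam ^ 2 * ‖xh - xf‖ ^ 2 := by
      rw [hzzp, norm_smul, Real.norm_eq_abs, mul_pow, sq_abs]
    have hn3 : ⟪gradh xh - gradh xs, z - zp⟫ = lam * ⟪gradh xh - gradh xs, xh - xf⟫ := by
      rw [hzzp, real_inner_smul_right]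
    rw [hn1, hn2, hn3]
    have hsc := mul_le_mul_of_nonneg_left c2 (le_of_lt (div_pos hlam hβf))
    have hL : lam / βf * (2 * βf * γ * (f xh + h xh - f xs - h xs))
        = 2 * γ * lam * (f xh + h xh - f xs - h xs) := by
      field_simp
    have hR : (1 + (γ - βf) / (2 * βf))
          * (‖z - zs‖ ^ 2
            - (‖z - zs‖ ^ 2 - 2 * lam * ⟪z - zs, xh - xf⟫ + lam ^ 2 * ‖xh - xf‖ ^ 2)
            + lam ^ 2 * ‖xh - xf‖ ^ 2)
          + 2 * γ * (1 + (γ - βf) / (2 * βf)) * (lam * ⟪gradh xh - gradh xs, xh - xf⟫)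
        = lam / βf * ((γ + βf) * ⟪z - zs, xh - xf⟫
            + (γ + βf) * γ * ⟪gradh xh - gradh xs, xh - xf⟫) := by
      field_simp; ring
    linarith [hsc, hL, hR]
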